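/- Let (K, t, c, λ) be a weak mixed distributive law in Cat, with splitting (a, π, σ), canonical action α, coaction γ, η₁ = π ∘ (η c), and ε₁ = (t ε) ∘ σ. Then (c ◁ ε₁) ∘ (c ◁ α) ∘ (λ ▷ a) ∘ (t ◁ γ) ∘ (t ◁ η₁) = λ (first diagram of the key Lemma of Böhm–Lack–Street). -/
import Mathlib


open CategoryTheory

universe v₁ u₁ v₂ u₂

variable {K : Type u₁} [Category.{v₁} K]

/-- A weak mixed distributive law `λ : tc ⟶ ct` between a monad `t` and a comonad `c`
on a category `K`, satisfying the four axioms of Böhm–Lack–Street, stated componentwise. -/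
structure WeakMixedDistLaw (t : CategoryTheory.Monad K) (c : CategoryTheory.Comonad K) where
  l : (c.toFunctor ⋙ t.toFunctor) ⟶ (t.toFunctor ⋙ c.toFunctor)
  mul_compat : ∀ X : K, t.μ.app (c.obj X) ≫ l.app X =
    t.map (l.app X) ≫ l.app (t.obj X) ≫ c.map (t.μ.app X)
  comul_compat : ∀ X : K, t.map (c.δ.app X) ≫ l.app (c.obj X) ≫ c.map (l.app X) =
    l.app X ≫ c.δ.app (t.obj X)
  weak_unit : ∀ X : K, t.η.app (c.obj X) ≫ l.app X =
    c.δ.app X ≫ c.map (t.η.app (c.obj X)) ≫ c.map (l.app X) ≫ c.map (c.ε.app (t.obj X))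
  weak_counit : ∀ X : K, l.app X ≫ c.ε.app (t.obj X) =
    t.map (t.η.app (c.obj X)) ≫ t.map (l.app X) ≫ t.map (c.ε.app (t.obj X)) ≫ t.μ.app X

/-- First diagram of the key Lemma:
(c ε₁) ∘ (c α) ∘ (λ a) ∘ (t γ) ∘ (t η₁) = λ. -/
theorem first_key_diagram (t : CategoryTheory.Monad K) (c : CategoryTheory.Comonad K)
    (W : WeakMixedDistLaw t c) (a : K ⥤ K) (π : (c.toFunctor ⋙ t.toFunctor) ⟶ a) (σ : a ⟶ (c.toFunctor ⋙ t.toFunctor))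
    (hsec : σ ≫ π = 𝟙 a)
    (hsplit : ∀ X : K, π.app X ≫ σ.app X =
      t.map (c.δ.app X) ≫ W.l.app (c.obj X) ≫ c.ε.app (t.obj (c.obj X))) :
    ∀ X : K,
      t.map (t.η.app (c.obj X) ≫ π.app X) ≫
        t.map (σ.app X ≫ t.map (c.δ.app X) ≫ W.l.app (c.obj X) ≫ c.map (π.app X)) ≫
        W.l.app (a.obj X) ≫
        c.map (t.map (σ.app X) ≫ t.μ.app (c.obj X) ≫ π.app X) ≫
        c.map (σ.app X ≫ t.map (c.ε.app X)) =
      W.l.app X := by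
  intro X
  have hTh := hsplit X
  have natl : ∀ {Y Z : K} (f : Y ⟶ Z),
      t.map (c.map f) ≫ W.l.app Z = W.l.app Y ≫ c.map (t.map f) := fun f => W.l.naturality f
  have nate : ∀ {Y Z : K} (f : Y ⟶ Z),
      c.map f ≫ c.ε.app Z = c.ε.app Y ≫ f := fun f => c.ε.naturality f
  -- abs1 : Θ ≫ tδ ≫ l_c = tδ ≫ l_c (with continuation)
  have abs1 : ∀ {Z : K} (g : (t.toFunctor ⋙ c.toFunctor).obj (c.obj X) ⟶ Z),
      t.map (c.δ.app X) ≫ W.l.app (c.obj X) ≫ c.ε.app (t.obj (c.obj X)) ≫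
        t.map (c.δ.app X) ≫ W.l.app (c.obj X) ≫ g =
      t.map (c.δ.app X) ≫ W.l.app (c.obj X) ≫ g := by
    intro Z g
    rw [← reassoc_of% (nate (t.map (c.δ.app X))),
        ← reassoc_of% (nate (W.l.app (c.obj X))),
        ← reassoc_of% (natl (c.δ.app X)),
        ← Functor.map_comp_assoc, Comonad.coassoc, Functor.map_comp_assoc,
        reassoc_of% (W.comul_compat (c.obj X)), Comonad.left_counit_assoc]
  have abs1' := abs1 (𝟙 _)
  simp only [Category.comp_id] at abs1'
  -- abs2 : Θ ≫ t.map ε = l ≫ ε_t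
  have abs2 : (t.map (c.δ.app X) ≫ W.l.app (c.obj X) ≫ c.ε.app (t.obj (c.obj X))) ≫
      t.map (c.ε.app X) = W.l.app X ≫ c.ε.app (t.obj X) := by
    rw [Category.assoc, Category.assoc, ← nate (t.map (c.ε.app X)),
        ← reassoc_of% (natl (c.ε.app X)), ← Functor.map_comp_assoc,
        Comonad.right_counit, CategoryTheory.Functor.map_id, Category.id_comp]
    rfl
  -- abs3 : Θ ≫ l = l
  have abs3 : (t.map (c.δ.app X) ≫ W.l.app (c.obj X) ≫ c.ε.app (t.obj (c.obj X))) ≫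
      W.l.app X = W.l.app X := by
    have nate2 : c.ε.app (t.obj (c.obj X)) ≫ W.l.app X =
        c.map (W.l.app X) ≫ c.ε.app (c.obj (t.obj X)) := (nate (W.l.app X)).symm
    rw [Category.assoc, Category.assoc, nate2,
        reassoc_of% (W.comul_compat X), Comonad.left_counit, Category.comp_id]
  have nat1 : t.map (c.map (π.app X)) ≫ W.l.app (a.obj X) =
      W.l.app (t.obj (c.obj X)) ≫ c.map (t.map (π.app X)) := W.l.naturality (π.app X)
  have natmu : t.map (t.map (c.δ.app X)) ≫ t.μ.app (c.obj (c.obj X)) =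
      t.μ.app (c.obj X) ≫ t.map (c.δ.app X) := t.μ.naturality (c.δ.app X)
  have m2 : c.map (t.map (π.app X)) ≫ c.map (t.map (σ.app X)) =
      c.map (t.map (t.map (c.δ.app X) ≫ W.l.app (c.obj X) ≫
        c.ε.app (t.obj (c.obj X)))) := by
    rw [← Functor.map_comp, ← Functor.map_comp, hTh]
  have m3 : c.map (t.map (c.δ.app X) ≫ W.l.app (c.obj X) ≫ c.ε.app (t.obj (c.obj X))) ≫
      c.map (t.map (c.ε.app X)) = c.map (W.l.app X) ≫ c.map (c.ε.app (t.obj X)) := by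
    rw [← Functor.map_comp, abs2, Functor.map_comp]
  have m4' : t.map (t.map (c.δ.app X) ≫ W.l.app (c.obj X) ≫ c.ε.app (t.obj (c.obj X))) ≫
      t.μ.app (c.obj X) ≫ W.l.app X = t.μ.app (c.obj X) ≫ W.l.app X := by
    rw [W.mul_compat X, ← Functor.map_comp_assoc, abs3]
  have m4 : c.map (t.map (t.map (c.δ.app X) ≫ W.l.app (c.obj X) ≫
        c.ε.app (t.obj (c.obj X)))) ≫
      c.map (t.μ.app (c.obj X)) ≫ c.map (W.l.app X) =
      c.map (t.μ.app (c.obj X)) ≫ c.map (W.l.app X) := by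
    simp only [← Functor.map_comp]
    rw [m4']
  have m5 : t.map (t.map (c.δ.app X) ≫ W.l.app (c.obj X) ≫
        c.ε.app (t.obj (c.obj X))) ≫
      t.map (t.map (c.δ.app X)) ≫ t.map (W.l.app (c.obj X)) =
      t.map (t.map (c.δ.app X)) ≫ t.map (W.l.app (c.obj X)) := by
    simp only [← Functor.map_comp, Category.assoc]
    rw [abs1']
  calc
    t.map (t.η.app (c.obj X) ≫ π.app X) ≫
        t.map (σ.app X ≫ t.map (c.δ.app X) ≫ W.l.app (c.obj X) ≫ c.map (π.app X)) ≫
        W.l.app (a.obj X) ≫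
        c.map (t.map (σ.app X) ≫ t.μ.app (c.obj X) ≫ π.app X) ≫
        c.map (σ.app X ≫ t.map (c.ε.app X))
      = t.map (t.η.app (c.obj X)) ≫ t.map (π.app X ≫ σ.app X) ≫
          t.map (t.map (c.δ.app X)) ≫ t.map (W.l.app (c.obj X)) ≫
          t.map (c.map (π.app X)) ≫ W.l.app (a.obj X) ≫
          c.map (t.map (σ.app X)) ≫ c.map (t.μ.app (c.obj X)) ≫
          c.map (π.app X ≫ σ.app X) ≫ c.map (t.map (c.ε.app X)) := by
        simp only [Functor.map_comp, Category.assoc]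
    _ = t.map (t.η.app (c.obj X)) ≫
          t.map (t.map (c.δ.app X) ≫ W.l.app (c.obj X) ≫ c.ε.app (t.obj (c.obj X))) ≫
          t.map (t.map (c.δ.app X)) ≫ t.map (W.l.app (c.obj X)) ≫
          t.map (c.map (π.app X)) ≫ W.l.app (a.obj X) ≫
          c.map (t.map (σ.app X)) ≫ c.map (t.μ.app (c.obj X)) ≫
          c.map (t.map (c.δ.app X) ≫ W.l.app (c.obj X) ≫ c.ε.app (t.obj (c.obj X))) ≫
          c.map (t.map (c.ε.app X)) := by rw [hTh]
    _ = t.map (t.η.app (c.obj X)) ≫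
          t.map (t.map (c.δ.app X) ≫ W.l.app (c.obj X) ≫ c.ε.app (t.obj (c.obj X))) ≫
          t.map (t.map (c.δ.app X)) ≫ t.map (W.l.app (c.obj X)) ≫
          W.l.app (t.obj (c.obj X)) ≫
          c.map (t.map (π.app X)) ≫ c.map (t.map (σ.app X)) ≫
          c.map (t.μ.app (c.obj X)) ≫
          c.map (t.map (c.δ.app X) ≫ W.l.app (c.obj X) ≫ c.ε.app (t.obj (c.obj X))) ≫
          c.map (t.map (c.ε.app X)) := by rw [reassoc_of% nat1]
    _ = t.map (t.η.app (c.obj X)) ≫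
          t.map (t.map (c.δ.app X) ≫ W.l.app (c.obj X) ≫ c.ε.app (t.obj (c.obj X))) ≫
          t.map (t.map (c.δ.app X)) ≫ t.map (W.l.app (c.obj X)) ≫
          W.l.app (t.obj (c.obj X)) ≫
          c.map (t.map (t.map (c.δ.app X) ≫ W.l.app (c.obj X) ≫
            c.ε.app (t.obj (c.obj X)))) ≫
          c.map (t.μ.app (c.obj X)) ≫
          c.map (W.l.app X) ≫ c.map (c.ε.app (t.obj X)) := by
        rw [reassoc_of% m2, m3]
    _ = t.map (t.η.app (c.obj X)) ≫
          t.map (t.map (c.δ.app X)) ≫ t.map (W.l.app (c.obj X)) ≫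
          W.l.app (t.obj (c.obj X)) ≫
          c.map (t.μ.app (c.obj X)) ≫
          c.map (W.l.app X) ≫ c.map (c.ε.app (t.obj X)) := by
        rw [reassoc_of% m4, reassoc_of% m5]
    _ = W.l.app X := by
        have hru : t.map (t.η.app (c.obj X)) ≫ t.μ.app (c.obj X) = 𝟙 (t.obj (c.obj X)) :=
          t.right_unit (c.obj X)
        rw [← reassoc_of% (W.mul_compat (c.obj X)), reassoc_of% natmu,
          reassoc_of% hru, reassoc_of% (W.comul_compat X),
          Comonad.right_counit, Category.comp_id]
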